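/- Fix integers d ≥ 1 and n ≥ 1. For g > 0 and ρ ∈ ℝ define the quick step weight of Y ∈ W_n as Q_{g,ρ,n}(Y) = (∏_{x∈range(Y)} F_{g,ρ}(n_x(Y))) / (Σ_{Y'∈W_n} ∏_{x∈range(Y')} F_{g,ρ}(n_x(Y'))). Suppose ρ = ρ(g) is chosen so that α(g,ρ(g)) = (ρ(g)−1)/(2√g) converges to a finite limit a ∈ ℝ as g → ∞. Then for every Y ∈ W_n, lim_{g→∞} Q_{g,ρ(g),n}(Y) = (∏_{x∈range(Y)} e^{a²} I_{n_x(Y)}(a)) / (Σ_{Y'∈W_n} ∏_{x∈range(Y')} e^{a²} I_{n_x(Y')}(a)). -/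

import Mathlib

/-!
Formalization of statements from "The strong interaction limit of
continuous-time weakly self-avoiding walk" by Brydges, Dahlqvist, Slade.

An `n`-step nearest-neighbour walk on `ℤ^d` starting at the origin is encoded
bijectively by its sequence of steps `s : Fin n → Fin d × Bool`, a step being a
coordinate direction together with a sign.
-/

open scoped BigOperators Topology
open Filter MeasureTheory Set

namespace StrongInteraction

/-- The unit step in coordinate direction `e.1`, with sign `e.2`. -/
def stepVec (d : ℕ) (e : Fin d × Bool) : Fin d → ℤ :=
  fun i => if i = e.1 then (if e.2 then 1 else -1) else 0

/-- `walkPos s k` is the position `Y_k` of the walk started at the origin whose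
successive nearest-neighbour steps are given by `s`. -/
def walkPos {d n : ℕ} (s : Fin n → Fin d × Bool) (k : Fin (n + 1)) : Fin d → ℤ :=
  ∑ i ∈ Finset.univ.filter (fun i : Fin n => (i : ℕ) < (k : ℕ)), stepVec d (s i)

/-- `n_x(Y)`: the number of visits to `x` by the walk. -/
def visits {d n : ℕ} (s : Fin n → Fin d × Bool) (x : Fin d → ℤ) : ℕ :=
  (Finset.univ.filter (fun k : Fin (n + 1) => walkPos s k = x)).card

/-- The set of distinct vertices visited by the walk. -/
def walkRange {d n : ℕ} (s : Fin n → Fin d × Bool) : Finset (Fin d → ℤ) :=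
  Finset.image (walkPos s) Finset.univ

/-- A walk is self-avoiding when its positions are pairwise distinct. -/
def SelfAvoiding {d n : ℕ} (s : Fin n → Fin d × Bool) : Prop :=
  Function.Injective (walkPos s)

instance {d n : ℕ} (s : Fin n → Fin d × Bool) : Decidable (SelfAvoiding s) :=
  inferInstanceAs (Decidable (Function.Injective (walkPos s)))

/-- `c_n`: the number of `n`-step self-avoiding walks. -/
def csaw (d n : ℕ) : ℕ :=
  (Finset.univ.filter fun s : Fin n → Fin d × Bool => SelfAvoiding s).card


/-- `F_{g,ρ}(m) = ∫_0^∞ (s^{m-1}/(m-1)!) e^{-s - g s² + ρ s} ds`, the contribution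
of a vertex visited `m` times, obtained from the Gamma(m,1) density of the sum of
`m` independent Exp(1) holding times. -/
noncomputable def F (g ρ : ℝ) (m : ℕ) : ℝ :=
  ∫ t in Set.Ioi (0 : ℝ),
    (t ^ (m - 1) / (Nat.factorial (m - 1))) * Real.exp (-t - g * t ^ 2 + ρ * t)

/-- The quick-step probability weight `Q_{g,ρ,n}(Y)` of a walk. -/
noncomputable def Qweight (d n : ℕ) (g ρ : ℝ) (s : Fin n → Fin d × Bool) : ℝ :=
  (∏ x ∈ walkRange s, F g ρ (visits s x)) /
    ∑ s' : Fin n → Fin d × Bool, ∏ x ∈ walkRange s', F g ρ (visits s' x)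

/-- `I_m(a) = ∫_{-a}^∞ ((a+u)^{m-1}/(m-1)!) e^{-u²} du`. -/
noncomputable def Ifun (a : ℝ) (m : ℕ) : ℝ :=
  ∫ u in Set.Ioi (-a), ((a + u) ^ (m - 1) / (Nat.factorial (m - 1))) * Real.exp (-u ^ 2)

lemma integral_Ioi_comp_add_right (f : ℝ → ℝ) (c d : ℝ) :
    ∫ x in Ioi c, f (x + d) = ∫ x in Ioi (c + d), f x := by
  rw [← integral_indicator measurableSet_Ioi, ← integral_indicator measurableSet_Ioi,
    ← integral_add_right_eq_self (Set.indicator (Ioi (c + d)) f) d]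
  congr 1
  funext x
  simp only [Set.indicator, mem_Ioi, add_lt_add_iff_right]

lemma Ifun_eq_K (a : ℝ) (m : ℕ) :
    Ifun a m = ∫ t in Ioi (0 : ℝ),
      (t ^ (m - 1) / (Nat.factorial (m - 1))) * Real.exp (-(t - a) ^ 2) := by
  have h := integral_Ioi_comp_add_right
    (fun u => ((a + u) ^ (m - 1) / (Nat.factorial (m - 1))) * Real.exp (-u ^ 2)) 0 (-a)
  rw [zero_add] at h
  rw [Ifun, ← h]
  refine setIntegral_congr_fun measurableSet_Ioi fun t _ => ?_
  rw [show a + (t + -a) = t by ring, show t + -a = t - a by ring]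

lemma boundFn_integrable (a : ℝ) :
    Integrable (fun t : ℝ => Real.exp 1 * Real.exp (t - (t - a) ^ 2 / 2)) := by
  have h0 : Integrable (fun t : ℝ => Real.exp (-(1/2 : ℝ) * (t - (1 + a)) ^ 2)) :=
    (integrable_exp_neg_mul_sq (by norm_num)).comp_sub_right (1 + a)
  have h1 := (h0.const_mul (Real.exp 1 * Real.exp ((1 + 2 * a) / 2)))
  refine h1.congr (Eventually.of_forall fun t => ?_)
  dsimp only
  rw [mul_assoc, ← Real.exp_add]
  congr 1
  ring

lemma K_norm_le {a y t : ℝ} (ht : 0 < t) (hy : |y - a| ≤ 1) (k : ℕ) :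
    ‖t ^ k / (Nat.factorial k : ℝ) * Real.exp (-(t - y) ^ 2)‖ ≤
      Real.exp 1 * Real.exp (t - (t - a) ^ 2 / 2) := by
  rw [Real.norm_eq_abs, abs_of_nonneg (by positivity)]
  have h1 : t ^ k / (Nat.factorial k : ℝ) ≤ Real.exp t :=
    Real.pow_div_factorial_le_exp t ht.le k
  have h2 : Real.exp (-(t - y) ^ 2) ≤ Real.exp (1 - (t - a) ^ 2 / 2) := by
    apply Real.exp_le_exp.2
    have hy2 : (y - a) ^ 2 ≤ 1 := by nlinarith [abs_le.mp hy]
    nlinarith [sq_nonneg ((t - y) - (y - a))]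
  calc t ^ k / (Nat.factorial k : ℝ) * Real.exp (-(t - y) ^ 2)
      ≤ Real.exp t * Real.exp (1 - (t - a) ^ 2 / 2) :=
        mul_le_mul h1 h2 (Real.exp_pos _).le (Real.exp_pos _).le
    _ = Real.exp 1 * Real.exp (t - (t - a) ^ 2 / 2) := by
        rw [← Real.exp_add, ← Real.exp_add]; ring_nf

lemma K_continuous (k : ℕ) (y : ℝ) :
    Continuous (fun t : ℝ => t ^ k / (Nat.factorial k : ℝ) * Real.exp (-(t - y) ^ 2)) := by
  fun_prop

lemma K_integrableOn (a : ℝ) (k : ℕ) :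
    IntegrableOn (fun t : ℝ => t ^ k / (Nat.factorial k : ℝ) * Real.exp (-(t - a) ^ 2))
      (Ioi 0) := by
  refine Integrable.mono (boundFn_integrable a).integrableOn
    ((K_continuous k a).aestronglyMeasurable.restrict) ?_
  filter_upwards [ae_restrict_mem measurableSet_Ioi] with t ht
  rw [Real.norm_eq_abs (Real.exp 1 * _), abs_of_nonneg (by positivity)]
  exact K_norm_le ht (by simp) k

lemma Ifun_pos (a : ℝ) (m : ℕ) : 0 < Ifun a m := by
  rw [Ifun_eq_K]
  rw [setIntegral_pos_iff_support_of_nonneg_ae ?_ (K_integrableOn a (m - 1))]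
  · have hsub : Ioi (0:ℝ) ⊆
        (Function.support fun t => t ^ (m-1) / (Nat.factorial (m-1) : ℝ) *
          Real.exp (-(t - a) ^ 2)) ∩ Ioi 0 := by
      intro t ht
      have ht' : (0:ℝ) < t := ht
      have hpos : 0 < t ^ (m-1) / (Nat.factorial (m-1) : ℝ) * Real.exp (-(t - a) ^ 2) := by
        positivity
      exact ⟨hpos.ne', ht⟩
    calc (0 : ENNReal) < volume (Ioi (0:ℝ)) := by simp [Real.volume_Ioi]
      _ ≤ _ := measure_mono hsub
  · filter_upwards [ae_restrict_mem measurableSet_Ioi] with t ht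
    have : (0:ℝ) < t := ht
    positivity

lemma F_key {g : ℝ} (hg : 0 < g) (ρ : ℝ) {m : ℕ} (hm : 1 ≤ m) :
    Real.sqrt g ^ m * F g ρ m
      = Real.exp (((ρ - 1) / (2 * Real.sqrt g)) ^ 2) *
        Ifun ((ρ - 1) / (2 * Real.sqrt g)) m := by
  have hb : 0 < Real.sqrt g := Real.sqrt_pos.2 hg
  set b := Real.sqrt g with hbdef
  set α := (ρ - 1) / (2 * b) with hαdef
  set k := m - 1 with hk
  have hmk : m = k + 1 := by omega
  have hb2 : b ^ 2 = g := Real.sq_sqrt hg.le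
  have hα : 2 * b * α = ρ - 1 := by
    rw [hαdef]; field_simp
  clear_value b α k
  have step1 : F g ρ m = Real.exp (α ^ 2) *
      ∫ t in Ioi (0:ℝ), (t ^ k / (Nat.factorial k : ℝ)) * Real.exp (-(b * t - α) ^ 2) := by
    rw [F, ← integral_const_mul _ _]
    refine setIntegral_congr_fun measurableSet_Ioi fun t _ => ?_
    have hexp : -t - g * t ^ 2 + ρ * t = α ^ 2 + (-(b * t - α) ^ 2) := by
      linear_combination (t ^ 2) * hb2 - t * hα
    simp only [← hk]
    rw [hexp, Real.exp_add]
    ring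
  have step2 : (∫ t in Ioi (0:ℝ), (t ^ k / (Nat.factorial k : ℝ)) * Real.exp (-(b * t - α) ^ 2))
      = b⁻¹ ^ m * Ifun α m := by
    have hcv := integral_comp_mul_left_Ioi
      (fun x => (x ^ k / (Nat.factorial k : ℝ)) * Real.exp (-(x - α) ^ 2)) 0 hb
    rw [mul_zero] at hcv
    have hlhs : (∫ x in Ioi (0:ℝ),
        (fun x => (x ^ k / (Nat.factorial k : ℝ)) * Real.exp (-(x - α) ^ 2)) (b * x))
        = b ^ k * ∫ t in Ioi (0:ℝ), (t ^ k / (Nat.factorial k : ℝ)) * Real.exp (-(b * t - α) ^ 2) := by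
      rw [← integral_const_mul _ _]
      refine setIntegral_congr_fun measurableSet_Ioi fun t _ => ?_
      simp only [mul_pow]
      ring
    rw [hlhs, smul_eq_mul] at hcv
    rw [Ifun_eq_K, ← hk, hmk]
    have hbk : (b:ℝ) ^ k ≠ 0 := pow_ne_zero _ hb.ne'
    apply mul_left_cancel₀ hbk
    rw [hcv]
    set K := ∫ x in Ioi (0:ℝ), x ^ k / (Nat.factorial k : ℝ) * Real.exp (-(x - α) ^ 2) with hK
    calc b⁻¹ * K = (b * b⁻¹) ^ k * (b⁻¹ * K) := by
          rw [mul_inv_cancel₀ hb.ne', one_pow, one_mul]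
      _ = b ^ k * (b⁻¹ ^ (k + 1) * K) := by rw [mul_pow]; ring
  rw [step1, step2, hmk]
  have hbm : b ^ (k+1) * (Real.exp (α ^ 2) * (b⁻¹ ^ (k+1) * Ifun α (k+1)))
      = (b ^ (k+1) * b⁻¹ ^ (k+1)) * (Real.exp (α ^ 2) * Ifun α (k+1)) := by ring
  rw [hbm, ← mul_pow, mul_inv_cancel₀ hb.ne', one_pow, one_mul]

lemma tendsto_Ifun {αf : ℝ → ℝ} {a : ℝ} (h : Tendsto αf atTop (𝓝 a)) (m : ℕ) :
    Tendsto (fun g => Ifun (αf g) m) atTop (𝓝 (Ifun a m)) := by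
  simp only [Ifun_eq_K]
  set k := m - 1 with hk
  have hev : ∀ᶠ g in atTop, |αf g - a| ≤ 1 := by
    have h2 := h.eventually (Metric.closedBall_mem_nhds a one_pos)
    filter_upwards [h2] with g hg
    simpa [Metric.mem_closedBall, Real.dist_eq] using hg
  refine tendsto_integral_filter_of_dominated_convergence
    (fun t => Real.exp 1 * Real.exp (t - (t - a) ^ 2 / 2)) ?_ ?_ ?_ ?_
  · exact Eventually.of_forall fun g => (K_continuous k (αf g)).aestronglyMeasurable.restrict
  · filter_upwards [hev] with g hg
    filter_upwards [ae_restrict_mem measurableSet_Ioi] with t ht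
    exact K_norm_le ht hg k
  · exact (boundFn_integrable a).integrableOn
  · refine Eventually.of_forall fun t => ?_
    have hc : Continuous fun y : ℝ =>
        t ^ k / (Nat.factorial k : ℝ) * Real.exp (-(t - y) ^ 2) := by fun_prop
    exact (hc.tendsto a).comp h

/-- quick step model: if `α(g,ρ(g)) = (ρ(g)-1)/(2√g) → a ∈ ℝ` as
`g → ∞`, the quick-step weights converge to the limiting quick-step measure. -/

lemma visits_pos {d n : ℕ} (s : Fin n → Fin d × Bool) {x : Fin d → ℤ}
    (hx : x ∈ walkRange s) : 1 ≤ visits s x := by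
  obtain ⟨k, -, rfl⟩ := Finset.mem_image.mp hx
  exact Finset.card_pos.mpr ⟨k, Finset.mem_filter.mpr ⟨Finset.mem_univ _, rfl⟩⟩

lemma sum_visits {d n : ℕ} (s : Fin n → Fin d × Bool) :
    ∑ x ∈ walkRange s, visits s x = n + 1 := by
  classical
  have := Finset.card_eq_sum_card_fiberwise
    (f := walkPos s) (s := Finset.univ) (t := walkRange s)
    (fun k _ => Finset.mem_image_of_mem _ (Finset.mem_univ k))
  simpa [visits, Finset.card_univ] using this.symm

lemma tendsto_expIfun {αf : ℝ → ℝ} {a : ℝ} (h : Tendsto αf atTop (𝓝 a)) (m : ℕ) :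
    Tendsto (fun g => Real.exp (αf g ^ 2) * Ifun (αf g) m) atTop
      (𝓝 (Real.exp (a ^ 2) * Ifun a m)) := by
  have h1 : Tendsto (fun g => Real.exp (αf g ^ 2)) atTop (𝓝 (Real.exp (a ^ 2))) :=
    ((Real.continuous_exp.comp (continuous_pow 2)).tendsto a).comp h
  exact h1.mul (tendsto_Ifun h m)

theorem quickstep_limit_finite_a (d n : ℕ) (hd : 1 ≤ d) (hn : 1 ≤ n)
    (ρ : ℝ → ℝ) (a : ℝ)
    (hα : Tendsto (fun g : ℝ => (ρ g - 1) / (2 * Real.sqrt g)) atTop (𝓝 a))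
    (s : Fin n → Fin d × Bool) :
    Tendsto (fun g : ℝ => Qweight d n g (ρ g) s) atTop
      (𝓝 ((∏ x ∈ walkRange s, Real.exp (a ^ 2) * Ifun a (visits s x)) /
        ∑ s' : Fin n → Fin d × Bool,
          ∏ x ∈ walkRange s', Real.exp (a ^ 2) * Ifun a (visits s' x))) := by
  classical
  haveI : NeZero d := ⟨by omega⟩
  set αf : ℝ → ℝ := fun g => (ρ g - 1) / (2 * Real.sqrt g) with hαf
  have hNum : Tendsto
      (fun g => ∏ x ∈ walkRange s, Real.exp (αf g ^ 2) * Ifun (αf g) (visits s x)) atTop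
      (𝓝 (∏ x ∈ walkRange s, Real.exp (a ^ 2) * Ifun a (visits s x))) :=
    tendsto_finset_prod _ fun x _ => tendsto_expIfun hα _
  have hDen : Tendsto
      (fun g => ∑ s' : Fin n → Fin d × Bool,
        ∏ x ∈ walkRange s', Real.exp (αf g ^ 2) * Ifun (αf g) (visits s' x)) atTop
      (𝓝 (∑ s' : Fin n → Fin d × Bool,
        ∏ x ∈ walkRange s', Real.exp (a ^ 2) * Ifun a (visits s' x))) :=
    tendsto_finset_sum _ fun s' _ => tendsto_finset_prod _ fun x _ => tendsto_expIfun hα _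
  have hD0 : (∑ s' : Fin n → Fin d × Bool,
      ∏ x ∈ walkRange s', Real.exp (a ^ 2) * Ifun a (visits s' x)) ≠ 0 := by
    refine ne_of_gt (Finset.sum_pos (fun s' _ => Finset.prod_pos fun x _ =>
      mul_pos (Real.exp_pos _) (Ifun_pos a _)) Finset.univ_nonempty)
  refine (Filter.Tendsto.congr' ?_ (hNum.div hDen hD0))
  filter_upwards [eventually_gt_atTop (0:ℝ)] with g hg
  have hb : 0 < Real.sqrt g := Real.sqrt_pos.2 hg
  have key : ∀ s' : Fin n → Fin d × Bool,
      ∏ x ∈ walkRange s', Real.exp (αf g ^ 2) * Ifun (αf g) (visits s' x)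
        = Real.sqrt g ^ (n + 1) * ∏ x ∈ walkRange s', F g (ρ g) (visits s' x) := by
    intro s'
    have : ∏ x ∈ walkRange s', Real.exp (αf g ^ 2) * Ifun (αf g) (visits s' x)
        = ∏ x ∈ walkRange s', Real.sqrt g ^ (visits s' x) * F g (ρ g) (visits s' x) :=
      Finset.prod_congr rfl fun x hx => (F_key hg (ρ g) (visits_pos s' hx)).symm
    rw [this, Finset.prod_mul_distrib, Finset.prod_pow_eq_pow_sum, sum_visits]
  simp only [Pi.div_apply, Qweight, key]
  rw [← Finset.mul_sum, mul_div_mul_left _ _ (pow_ne_zero _ hb.ne')]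

end StrongInteraction
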